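/- Let G be a finite simple graph on n vertices in which every vertex has positive degree, and let v_1, …, v_n be an orthonormal basis of ℝ^n consisting of eigenvectors of the normalized Laplacian L with L v_i = λ_i v_i. For a pair of vertices {x,y}, define the edge derivative of Kemeny's constant dK/d{x,y} := Σ_{i : λ_i ≠ 0} −(1/λ_i²)·F(v_i, λ_i, {x,y}). Then the sum of these derivatives over all edges of G is zero: Σ_{{x,y} ∈ E(G)} dK/d{x,y} = 0. -/

import Mathlib

open Finset

variable {V : Type*} [Fintype V] [DecidableEq V]

/-- The normalized Laplacian `L = I - D^{-1/2} A D^{-1/2}` of a simple graph. -/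
noncomputable def normLap (G : SimpleGraph V) [DecidableRel G.Adj] : Matrix V V ℝ :=
  fun x y =>
    if x = y then 1
    else if G.Adj x y then -(1 / Real.sqrt ((G.degree x : ℝ) * (G.degree y : ℝ)))
    else 0

/-- The Aksoy–Purvine–Young edge-derivative expression
`F(v, λ, {x,y}) = (1-λ)(v_x²/d_x + v_y²/d_y) − 2 v_x v_y / √(d_x d_y)`. -/
noncomputable def edgeDeriv (G : SimpleGraph V) [DecidableRel G.Adj]
    (v : V → ℝ) (lam : ℝ) (x y : V) : ℝ :=
  (1 - lam) * (v x ^ 2 / (G.degree x : ℝ) + v y ^ 2 / (G.degree y : ℝ))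
    - 2 * (v x * v y) / Real.sqrt ((G.degree x : ℝ) * (G.degree y : ℝ))

lemma edgeDeriv_symm (G : SimpleGraph V) [DecidableRel G.Adj] (v : V → ℝ) (lam : ℝ) :
    ∀ x y : V, edgeDeriv G v lam x y = edgeDeriv G v lam y x := by
  intro x y
  unfold edgeDeriv
  rw [mul_comm ((G.degree x : ℝ)) ((G.degree y : ℝ))]
  ring

/-- The edge-derivative expression, as a function on unordered pairs. -/
noncomputable def edgeDerivSym (G : SimpleGraph V) [DecidableRel G.Adj]
    (v : V → ℝ) (lam : ℝ) : Sym2 V → ℝ :=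
  Sym2.lift ⟨fun x y => edgeDeriv G v lam x y, edgeDeriv_symm G v lam⟩

/-- The edge derivative of Kemeny's constant with respect to the pair `{x,y}`:
`dK/d{x,y} = Σ_{i : λ_i ≠ 0} −(1/λ_i²) F(v_i, λ_i, {x,y})`. -/
noncomputable def kemenyDeriv (G : SimpleGraph V) [DecidableRel G.Adj] {n : ℕ}
    (w : Fin n → V → ℝ) (lam : Fin n → ℝ) (x y : V) : ℝ :=
  ∑ i, if lam i = 0 then 0 else -(1 / lam i ^ 2) * edgeDeriv G (w i) (lam i) x y

lemma kemenyDeriv_symm (G : SimpleGraph V) [DecidableRel G.Adj] {n : ℕ}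
    (w : Fin n → V → ℝ) (lam : Fin n → ℝ) :
    ∀ x y : V, kemenyDeriv G w lam x y = kemenyDeriv G w lam y x := by
  intro x y
  unfold kemenyDeriv
  refine Finset.sum_congr rfl fun i _ => ?_
  rw [edgeDeriv_symm G (w i) (lam i) x y]

/-- The edge derivative of Kemeny's constant, as a function on unordered pairs. -/
noncomputable def kemenyDerivSym (G : SimpleGraph V) [DecidableRel G.Adj] {n : ℕ}
    (w : Fin n → V → ℝ) (lam : Fin n → ℝ) : Sym2 V → ℝ :=
  Sym2.lift ⟨fun x y => kemenyDeriv G w lam x y, kemenyDeriv_symm G w lam⟩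


lemma two_mul_sum_edges (G : SimpleGraph V) [DecidableRel G.Adj] (f : Sym2 V → ℝ) :
    (2 : ℝ) * ∑ e ∈ G.edgeFinset, f e = ∑ x, ∑ y ∈ G.neighborFinset x, f s(x, y) := by
  have h1 : ∑ d : G.Dart, f d.edge = ∑ e ∈ G.edgeFinset, (2 : ℝ) * f e := by
    rw [← Finset.sum_fiberwise_of_maps_to (g := SimpleGraph.Dart.edge)
      (fun d _ => SimpleGraph.mem_edgeFinset.2 d.edge_mem) (fun d => f d.edge)]
    refine Finset.sum_congr rfl fun e he => ?_
    have hcard : #{d : G.Dart | d.edge = e} = 2 :=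
      G.dart_edge_fiber_card e (SimpleGraph.mem_edgeFinset.1 he)
    calc ∑ d ∈ {d : G.Dart | d.edge = e}, f d.edge
        = ∑ d ∈ {d : G.Dart | d.edge = e}, f e := by
          refine Finset.sum_congr rfl fun d hd => ?_
          rw [(Finset.mem_filter.1 hd).2]
      _ = 2 * f e := by rw [Finset.sum_const, hcard]; norm_num
  have h2 : ∑ d : G.Dart, f d.edge = ∑ x, ∑ y ∈ G.neighborFinset x, f s(x, y) := by
    let eqv : (Σ x, G.neighborSet x) ≃ G.Dart :=
      { toFun := fun s => ⟨(s.fst, s.snd), s.snd.property⟩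
        invFun := fun d => ⟨d.fst, d.snd, d.adj⟩
        left_inv := fun s => by ext <;> simp
        right_inv := fun d => by ext <;> simp }
    rw [← Equiv.sum_comp eqv (fun d => f d.edge)]
    rw [← Finset.univ_sigma_univ, Finset.sum_sigma]
    refine Finset.sum_congr rfl fun x _ => ?_
    rw [Finset.sum_subtype (G.neighborFinset x) (fun y => G.mem_neighborFinset x y)
      (fun y => f s(x, y))]
    rfl
  rw [← h2, h1, Finset.mul_sum]

lemma eig_identity (G : SimpleGraph V) [DecidableRel G.Adj] (v : V → ℝ) (lam : ℝ)
    (heig : (normLap G).mulVec v = lam • v) (x : V) :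
    ∑ y ∈ G.neighborFinset x, v y / Real.sqrt ((G.degree x : ℝ) * (G.degree y : ℝ))
      = (1 - lam) * v x := by
  have h := congrFun heig x
  have hmv : (normLap G).mulVec v x = ∑ y, normLap G x y * v y := by
    simp [Matrix.mulVec, dotProduct]
  have hsplit : ∑ y, normLap G x y * v y
      = (∑ y, if x = y then v y else 0)
        + ∑ y, if G.Adj x y then
            -(1 / Real.sqrt ((G.degree x : ℝ) * (G.degree y : ℝ))) * v y else 0 := by
    rw [← Finset.sum_add_distrib]
    refine Finset.sum_congr rfl fun y _ => ?_
    unfold normLap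
    by_cases hxy : x = y
    · simp [hxy, G.irrefl]
    · by_cases hadj : G.Adj x y <;> simp [hxy, hadj]
  rw [hmv, hsplit] at h
  simp only [Finset.sum_ite_eq, Finset.mem_univ, if_true] at h
  rw [← Finset.sum_filter, ← SimpleGraph.neighborFinset_eq_filter] at h
  have h2 : ∑ y ∈ G.neighborFinset x,
      -(1 / Real.sqrt ((G.degree x : ℝ) * (G.degree y : ℝ))) * v y
      = -∑ y ∈ G.neighborFinset x, v y / Real.sqrt ((G.degree x : ℝ) * (G.degree y : ℝ)) := by
    rw [← Finset.sum_neg_distrib]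
    exact Finset.sum_congr rfl fun y _ => by ring
  rw [h2] at h
  have h3 : (lam • v) x = lam * v x := rfl
  rw [h3] at h
  linarith

lemma sum_edgeDeriv_eq_zero (G : SimpleGraph V) [DecidableRel G.Adj]
    (hdeg : ∀ z : V, 0 < G.degree z) (v : V → ℝ) (lam : ℝ)
    (heig : (normLap G).mulVec v = lam • v) :
    ∑ e ∈ G.edgeFinset, edgeDerivSym G v lam e = 0 := by
  have key : (2 : ℝ) * ∑ e ∈ G.edgeFinset, edgeDerivSym G v lam e = 0 := by
    rw [two_mul_sum_edges]
    have hx : ∀ x, ∑ y ∈ G.neighborFinset x, edgeDerivSym G v lam s(x, y)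
        = -(1 - lam) * v x ^ 2
          + ∑ y ∈ G.neighborFinset x, (1 - lam) * (v y ^ 2 / (G.degree y : ℝ)) := by
      intro x
      have hde : ∀ y, edgeDerivSym G v lam s(x, y) = edgeDeriv G v lam x y := fun _ => rfl
      have hsum : ∑ y ∈ G.neighborFinset x, edgeDeriv G v lam x y
          = (∑ y ∈ G.neighborFinset x, (1 - lam) * (v x ^ 2 / (G.degree x : ℝ)))
            + (∑ y ∈ G.neighborFinset x, (1 - lam) * (v y ^ 2 / (G.degree y : ℝ)))
            - 2 * v x * ∑ y ∈ G.neighborFinset x,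
                v y / Real.sqrt ((G.degree x : ℝ) * (G.degree y : ℝ)) := by
        rw [← Finset.sum_add_distrib, Finset.mul_sum, ← Finset.sum_sub_distrib]
        refine Finset.sum_congr rfl fun y _ => ?_
        unfold edgeDeriv
        ring
      have hconst : ∑ y ∈ G.neighborFinset x, (1 - lam) * (v x ^ 2 / (G.degree x : ℝ))
          = (1 - lam) * v x ^ 2 := by
        rw [Finset.sum_const, G.card_neighborFinset_eq_degree, nsmul_eq_mul]
        have hd : (G.degree x : ℝ) ≠ 0 := Nat.cast_ne_zero.2 (hdeg x).ne'
        field_simp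
      simp only [hde]
      rw [hsum, hconst, eig_identity G v lam heig x]
      ring
    simp only [hx]
    rw [Finset.sum_add_distrib]
    have hswap : ∑ x, ∑ y ∈ G.neighborFinset x, (1 - lam) * (v y ^ 2 / (G.degree y : ℝ))
        = ∑ y, ∑ x ∈ G.neighborFinset y, (1 - lam) * (v y ^ 2 / (G.degree y : ℝ)) := by
      refine Finset.sum_comm' fun x y => ?_
      simp [SimpleGraph.mem_neighborFinset, SimpleGraph.adj_comm]
    rw [hswap]
    have hinner : ∀ y : V, ∑ x ∈ G.neighborFinset y, (1 - lam) * (v y ^ 2 / (G.degree y : ℝ))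
        = (1 - lam) * v y ^ 2 := by
      intro y
      rw [Finset.sum_const, G.card_neighborFinset_eq_degree, nsmul_eq_mul]
      have hd : (G.degree y : ℝ) ≠ 0 := Nat.cast_ne_zero.2 (hdeg y).ne'
      field_simp
    simp only [hinner]
    rw [← Finset.sum_add_distrib]
    refine Finset.sum_eq_zero fun x _ => by ring
  linarith

theorem kemeny_derivatives_sum_over_edges_zero
    (G : SimpleGraph V) [DecidableRel G.Adj]
    (hdeg : ∀ z : V, 0 < G.degree z)
    (w : Fin (Fintype.card V) → V → ℝ) (lam : Fin (Fintype.card V) → ℝ)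
    (horth : ∀ i j, (∑ z, w i z * w j z) = if i = j then 1 else 0)
    (heig : ∀ i, (normLap G).mulVec (w i) = lam i • w i) :
    ∑ e ∈ G.edgeFinset, kemenyDerivSym G w lam e = 0 := by
  have hkd : ∀ e ∈ G.edgeFinset, kemenyDerivSym G w lam e
      = ∑ i, if lam i = 0 then 0
          else -(1 / lam i ^ 2) * edgeDerivSym G (w i) (lam i) e := by
    intro e _
    induction e with
    | _ x y => rfl
  rw [Finset.sum_congr rfl hkd, Finset.sum_comm]
  refine Finset.sum_eq_zero fun i _ => ?_
  by_cases hl : lam i = 0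
  · simp [hl]
  · simp only [hl, if_false]
    rw [← Finset.mul_sum, sum_edgeDeriv_eq_zero G hdeg (w i) (lam i) (heig i), mul_zero]
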